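/- arXiv:2602.09326 — 2 statements merged into one kernel-verified Lean document; each statement's English description precedes it below -/
import Mathlib

section
/- For an ordered partition poset, the weighted Shapley distribution p_WSV(π) = ∏_{t=1}^n λ_{π_t} / (∑_{k ∈ max_⪯(S_t)} λ_k) is a probability distribution on the set of linear extensions: its values are nonnegative and sum to 1 over all linear extensions π. -/
open Finset
open scoped Classical BigOperators

def IsLinExt {n : ℕ} (le : Fin n → Fin n → Prop) (π : Equiv.Perm (Fin n)) : Prop :=
  ∀ i j : Fin n, le i j → i ≠ j → ((π.symm i : ℕ) < (π.symm j : ℕ))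

def prefixSet {n : ℕ} (π : Equiv.Perm (Fin n)) (t : ℕ) : Finset (Fin n) :=
  Finset.univ.filter fun i => (π.symm i : ℕ) < t

noncomputable def maxSet {n : ℕ} (le : Fin n → Fin n → Prop) (S : Finset (Fin n)) :
    Finset (Fin n) :=
  S.filter fun i => ∀ j ∈ S, le i j → i = j

noncomputable def pasvW {n : ℕ} (le : Fin n → Fin n → Prop) (lam : Fin n → ℝ)
    (π : Equiv.Perm (Fin n)) : ℝ :=
  ∏ t : Fin n,
    lam (π t) * (maxSet le (prefixSet π (t.1 + 1))).card /
      ∑ k ∈ maxSet le (prefixSet π (t.1 + 1)), lam k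

noncomputable def pasvDist {n : ℕ} (le : Fin n → Fin n → Prop) (lam : Fin n → ℝ)
    (π : Equiv.Perm (Fin n)) : ℝ :=
  if IsLinExt le π then
    pasvW le lam π / ∑ σ ∈ Finset.univ.filter (fun σ => IsLinExt le σ), pasvW le lam σ
  else 0

def opLe {n m : ℕ} (blk : Fin n → Fin m) : Fin n → Fin n → Prop :=
  fun a b => a = b ∨ blk a < blk b

/-! ### Auxiliary machinery -/

/-- Prefix set of a finite sequence. -/
def pref {n d : ℕ} (g : Fin d → Fin n) (t : ℕ) : Finset (Fin n) :=
  (Finset.univ.filter fun s : Fin d => (s : ℕ) < t).image g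

/-- Each element is maximal among the elements seen so far. -/
def Ok {n d m : ℕ} (blk : Fin n → Fin m) (g : Fin d → Fin n) : Prop :=
  ∀ t : Fin d, ∀ j ∈ pref g (t.1 + 1), opLe blk (g t) j → g t = j

lemma maxSet_nonempty {n m : ℕ} (blk : Fin n → Fin m) {S : Finset (Fin n)}
    (hS : S.Nonempty) : (maxSet (opLe blk) S).Nonempty := by
  obtain ⟨i, hiS, hi⟩ := S.exists_max_image (fun i => blk i) hS
  refine ⟨i, Finset.mem_filter.2 ⟨hiS, fun j hj hle => ?_⟩⟩
  rcases hle with h | h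
  · exact h
  · exact absurd h (not_lt.2 (hi j hj))

lemma fsum_pos {n m : ℕ} (blk : Fin n → Fin m) (lam : Fin n → ℝ)
    (hlam : ∀ i, 0 < lam i) {S : Finset (Fin n)} (hS : S.Nonempty) :
    0 < ∑ k ∈ maxSet (opLe blk) S, lam k :=
  Finset.sum_pos (fun i _ => hlam i) (maxSet_nonempty blk hS)

lemma pref_snoc {n d : ℕ} (g : Fin d → Fin n) (k : Fin n) {t : ℕ} (ht : t ≤ d) :
    pref (Fin.snoc g k) t = pref g t := by
  ext x
  simp only [pref, Finset.mem_image, Finset.mem_filter, Finset.mem_univ, true_and]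
  constructor
  · rintro ⟨s, hs, rfl⟩
    induction s using Fin.lastCases with
    | last => exact absurd hs (by simp; omega)
    | cast i => exact ⟨i, hs, by simp⟩
  · rintro ⟨s, hs, rfl⟩
    exact ⟨Fin.castSucc s, hs, Fin.snoc_castSucc _ _ _⟩

lemma pref_top {n d : ℕ} (g : Fin d → Fin n) {t : ℕ} (ht : d ≤ t) :
    pref g t = Finset.univ.image g := by
  unfold pref
  congr 1
  ext s
  simp [lt_of_lt_of_le s.isLt ht]

lemma image_snoc {n d : ℕ} (g : Fin d → Fin n) (k : Fin n) :
    Finset.univ.image (Fin.snoc g k : Fin (d + 1) → Fin n)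
      = insert k (Finset.univ.image g) := by
  ext x
  simp only [Finset.mem_image, Finset.mem_univ, true_and, Finset.mem_insert]
  constructor
  · rintro ⟨s, rfl⟩
    induction s using Fin.lastCases with
    | last => left; simp
    | cast i => right; exact ⟨i, (Fin.snoc_castSucc _ _ _).symm ▸ rfl⟩
  · rintro (rfl | ⟨s, rfl⟩)
    · exact ⟨Fin.last d, Fin.snoc_last _ _⟩
    · exact ⟨Fin.castSucc s, Fin.snoc_castSucc _ _ _⟩

/-- snoc equivalence. -/
def mySnocEquiv (n d : ℕ) : ((Fin d → Fin n) × Fin n) ≃ (Fin (d + 1) → Fin n) where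
  toFun p := Fin.snoc p.1 p.2
  invFun g := (g ∘ Fin.castSucc, g (Fin.last d))
  left_inv p := by
    ext s
    · simp
    · simp
  right_inv g := by
    funext s
    induction s using Fin.lastCases with
    | last => simp
    | cast i => simp

lemma key {n m : ℕ} (blk : Fin n → Fin m) (lam : Fin n → ℝ) (hlam : ∀ i, 0 < lam i) :
    ∀ (d : ℕ) (S : Finset (Fin n)), S.card = d →
      (∑ g ∈ Finset.univ.filter
          (fun g : Fin d → Fin n => Finset.univ.image g = S ∧ Ok blk g),
        ∏ t : Fin d, lam (g t) /
          ∑ k ∈ maxSet (opLe blk) (pref g (t.1 + 1)), lam k) = 1 := by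
  intro d
  induction d with
  | zero =>
    intro S hS
    rw [Finset.card_eq_zero] at hS
    subst hS
    have h1 : ∀ g : Fin 0 → Fin n, Finset.univ.image g = (∅ : Finset (Fin n)) ∧ Ok blk g := by
      intro g
      exact ⟨by simp, fun t => t.elim0⟩
    rw [Finset.filter_true_of_mem (fun g _ => h1 g)]
    simp
  | succ d ih =>
    intro S hS
    have hSne : S.Nonempty := Finset.card_pos.1 (by omega)
    have hT : (0 : ℝ) < ∑ k ∈ maxSet (opLe blk) S, lam k := fsum_pos blk lam hlam hSne
    rw [Finset.sum_filter]
    rw [← Fintype.sum_equiv (mySnocEquiv n d)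
      (fun p : (Fin d → Fin n) × Fin n =>
        if Finset.univ.image (Fin.snoc p.1 p.2 : Fin (d+1) → Fin n) = S
            ∧ Ok blk (Fin.snoc p.1 p.2 : Fin (d+1) → Fin n) then
          ∏ t : Fin (d+1), lam ((Fin.snoc p.1 p.2 : Fin (d+1) → Fin n) t) /
            ∑ k ∈ maxSet (opLe blk)
              (pref (Fin.snoc p.1 p.2 : Fin (d+1) → Fin n) (t.1 + 1)), lam k
        else 0) _ (fun p => rfl)]
    rw [Fintype.sum_prod_type]
    -- swap the two sums
    rw [Finset.sum_comm]
    have pointwise : ∀ (k : Fin n) (g' : Fin d → Fin n),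
        (if Finset.univ.image (Fin.snoc g' k : Fin (d+1) → Fin n) = S
            ∧ Ok blk (Fin.snoc g' k : Fin (d+1) → Fin n) then
          ∏ t : Fin (d+1), lam ((Fin.snoc g' k : Fin (d+1) → Fin n) t) /
            ∑ j ∈ maxSet (opLe blk)
              (pref (Fin.snoc g' k : Fin (d+1) → Fin n) (t.1 + 1)), lam j
        else 0)
        = (if k ∈ maxSet (opLe blk) S then
            (if Finset.univ.image g' = S.erase k ∧ Ok blk g' then
              ∏ t : Fin d, lam (g' t) /
                ∑ j ∈ maxSet (opLe blk) (pref g' (t.1 + 1)), lam j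
            else 0) * (lam k / ∑ j ∈ maxSet (opLe blk) S, lam j)
          else 0) := by
      intro k g'
      have equivCond :
          (Finset.univ.image (Fin.snoc g' k : Fin (d+1) → Fin n) = S
            ∧ Ok blk (Fin.snoc g' k : Fin (d+1) → Fin n))
          ↔ (k ∈ maxSet (opLe blk) S ∧ (Finset.univ.image g' = S.erase k ∧ Ok blk g')) := by
        constructor
        · rintro ⟨himg, hok⟩
          rw [image_snoc] at himg
          have hkS : k ∈ S := himg ▸ Finset.mem_insert_self k _
          have hmax : ∀ j ∈ S, opLe blk k j → k = j := by
            intro j hj hle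
            have := hok (Fin.last d) j ?_ ?_
            · simpa using this
            · rw [pref_top _ (by simp), image_snoc, himg]; exact hj
            · simpa using hle
          have himg' : Finset.univ.image g' = S.erase k := by
            refine (Finset.eq_of_subset_of_card_le ?_ ?_).symm
            · intro x hx
              have hxS : x ∈ S := Finset.mem_of_mem_erase hx
              have hxk : x ≠ k := Finset.ne_of_mem_erase hx
              rw [← himg] at hxS
              rcases Finset.mem_insert.1 hxS with h | h
              · exact absurd h hxk
              · exact h
            · calc (Finset.univ.image g').card ≤ (Finset.univ : Finset (Fin d)).card :=
                    Finset.card_image_le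
                _ = d := by simp
                _ = (S.erase k).card := by rw [Finset.card_erase_of_mem hkS, hS]; omega
          refine ⟨Finset.mem_filter.2 ⟨hkS, hmax⟩, himg', ?_⟩
          intro t j hj hle
          have h1 : (Fin.snoc g' k : Fin (d+1) → Fin n) (Fin.castSucc t) = g' t :=
            Fin.snoc_castSucc _ _ _
          have h2 := hok (Fin.castSucc t) j ?_ ?_
          · rw [h1] at h2; exact h2
          · rw [show ((Fin.castSucc t : Fin (d+1)) : ℕ) = (t : ℕ) from rfl,
              pref_snoc _ _ (by omega)]
            exact hj
          · rw [h1]; exact hle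
        · rintro ⟨hkmax, himg', hok'⟩
          have hkS : k ∈ S := (Finset.mem_filter.1 hkmax).1
          have hmax := (Finset.mem_filter.1 hkmax).2
          constructor
          · rw [image_snoc, himg', Finset.insert_erase hkS]
          · intro t j hj hle
            induction t using Fin.lastCases with
            | last =>
              rw [pref_top _ (by simp), image_snoc, himg', Finset.insert_erase hkS] at hj
              simp only [Fin.snoc_last] at hle ⊢
              exact hmax j hj hle
            | cast i =>
              have h1 : (Fin.snoc g' k : Fin (d+1) → Fin n) (Fin.castSucc i) = g' i :=
                Fin.snoc_castSucc _ _ _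
              rw [show ((Fin.castSucc i : Fin (d+1)) : ℕ) = (i : ℕ) from rfl,
                pref_snoc _ _ (by omega)] at hj
              rw [h1] at hle ⊢
              exact hok' i j hj hle
      by_cases hcond : Finset.univ.image (Fin.snoc g' k : Fin (d+1) → Fin n) = S
          ∧ Ok blk (Fin.snoc g' k : Fin (d+1) → Fin n)
      · obtain ⟨hkmax, himg', hok'⟩ := equivCond.1 hcond
        rw [if_pos hcond, if_pos hkmax, if_pos ⟨himg', hok'⟩]
        rw [Fin.prod_univ_castSucc]
        congr 1
        · apply Finset.prod_congr rfl
          intro t _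
          rw [Fin.snoc_castSucc,
            show ((Fin.castSucc t : Fin (d+1)) : ℕ) = (t : ℕ) from rfl,
            pref_snoc _ _ (by omega)]
        · rw [Fin.snoc_last, show ((Fin.last d : Fin (d+1)) : ℕ) = d from rfl,
            pref_top _ (le_refl (d+1)), hcond.1]
      · rw [if_neg hcond]
        by_cases hk : k ∈ maxSet (opLe blk) S
        · rw [if_pos hk]
          have : ¬ (Finset.univ.image g' = S.erase k ∧ Ok blk g') := by
            intro h
            exact hcond (equivCond.2 ⟨hk, h⟩)
          rw [if_neg this, zero_mul]
        · rw [if_neg hk]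
    calc (∑ k : Fin n, ∑ g' : Fin d → Fin n,
          if Finset.univ.image (Fin.snoc g' k : Fin (d+1) → Fin n) = S
              ∧ Ok blk (Fin.snoc g' k : Fin (d+1) → Fin n) then
            ∏ t : Fin (d+1), lam ((Fin.snoc g' k : Fin (d+1) → Fin n) t) /
              ∑ j ∈ maxSet (opLe blk)
                (pref (Fin.snoc g' k : Fin (d+1) → Fin n) (t.1 + 1)), lam j
          else 0)
        = ∑ k : Fin n, ∑ g' : Fin d → Fin n,
            (if k ∈ maxSet (opLe blk) S then
              (if Finset.univ.image g' = S.erase k ∧ Ok blk g' then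
                ∏ t : Fin d, lam (g' t) /
                  ∑ j ∈ maxSet (opLe blk) (pref g' (t.1 + 1)), lam j
              else 0) * (lam k / ∑ j ∈ maxSet (opLe blk) S, lam j)
            else 0) := by
          apply Finset.sum_congr rfl; intro k _
          apply Finset.sum_congr rfl; intro g' _
          exact pointwise k g'
      _ = ∑ k : Fin n,
            (if k ∈ maxSet (opLe blk) S then
              (∑ g' : Fin d → Fin n,
                if Finset.univ.image g' = S.erase k ∧ Ok blk g' then
                  ∏ t : Fin d, lam (g' t) /
                    ∑ j ∈ maxSet (opLe blk) (pref g' (t.1 + 1)), lam j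
                else 0) * (lam k / ∑ j ∈ maxSet (opLe blk) S, lam j)
            else 0) := by
          apply Finset.sum_congr rfl; intro k _
          by_cases hk : k ∈ maxSet (opLe blk) S
          · rw [if_pos hk, Finset.sum_mul]
            apply Finset.sum_congr rfl; intro g' _
            rw [if_pos hk]
          · simp [hk]
      _ = ∑ k : Fin n,
            (if k ∈ maxSet (opLe blk) S then
              lam k / ∑ j ∈ maxSet (opLe blk) S, lam j
            else 0) := by
          apply Finset.sum_congr rfl; intro k _
          by_cases hk : k ∈ maxSet (opLe blk) S
          · rw [if_pos hk, if_pos hk]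
            have hkS : k ∈ S := (Finset.mem_filter.1 hk).1
            have := ih (S.erase k) (by rw [Finset.card_erase_of_mem hkS, hS]; omega)
            rw [Finset.sum_filter] at this
            rw [this, one_mul]
          · rw [if_neg hk, if_neg hk]
      _ = 1 := by
          rw [← Finset.sum_filter]
          have : Finset.univ.filter (fun k => k ∈ maxSet (opLe blk) S)
              = maxSet (opLe blk) S := by
            ext k; simp
          rw [this, ← Finset.sum_div, div_self (ne_of_gt hT)]

lemma prefixSet_eq_pref {n : ℕ} (π : Equiv.Perm (Fin n)) (t : ℕ) :
    prefixSet π t = pref (⇑π) t := by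
  ext x
  simp only [prefixSet, pref, Finset.mem_filter, Finset.mem_image, Finset.mem_univ, true_and]
  constructor
  · intro h
    exact ⟨π.symm x, h, π.apply_symm_apply x⟩
  · rintro ⟨s, hs, rfl⟩
    simpa using hs

theorem stmt2 {n m : ℕ} (blk : Fin n → Fin m) (hsurj : Function.Surjective blk)
    (lam : Fin n → ℝ) (hlam : ∀ i, 0 < lam i) :
    (∀ π : Equiv.Perm (Fin n),
        0 ≤ ∏ t : Fin n,
          lam (π t) / ∑ k ∈ maxSet (opLe blk) (prefixSet π (t.1 + 1)), lam k) ∧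
    (∑ π ∈ Finset.univ.filter (fun σ => IsLinExt (opLe blk) σ),
        ∏ t : Fin n,
          lam (π t) / ∑ k ∈ maxSet (opLe blk) (prefixSet π (t.1 + 1)), lam k) = 1 := by
  constructor
  · intro π
    apply Finset.prod_nonneg
    intro t _
    exact div_nonneg (hlam _).le (Finset.sum_nonneg fun k _ => (hlam k).le)
  · have hkey := key blk lam hlam n Finset.univ (by simp)
    rw [← hkey]
    apply Finset.sum_bij (fun (π : Equiv.Perm (Fin n)) _ => ⇑π)
    · -- maps into target
      intro π hπ
      have hlin : IsLinExt (opLe blk) π := (Finset.mem_filter.1 hπ).2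
      refine Finset.mem_filter.2 ⟨Finset.mem_univ _, ?_, ?_⟩
      · ext x
        simp only [Finset.mem_image, Finset.mem_univ, true_and, iff_true]
        exact ⟨π.symm x, π.apply_symm_apply x⟩
      · intro t j hj hle
        rw [← prefixSet_eq_pref] at hj
        by_contra hne
        have := hlin (π t) j hle hne
        simp only [Equiv.symm_apply_apply] at this
        simp only [prefixSet, Finset.mem_filter] at hj
        omega
    · -- injective
      intro π₁ h₁ π₂ h₂ h
      exact Equiv.coe_fn_injective h
    · -- surjective
      intro g hg
      obtain ⟨himg, hok⟩ := (Finset.mem_filter.1 hg).2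
      have hsurjg : Function.Surjective g := by
        intro x
        have : x ∈ Finset.univ.image g := by rw [himg]; exact Finset.mem_univ x
        obtain ⟨s, _, hs⟩ := Finset.mem_image.1 this
        exact ⟨s, hs⟩
      have hbij : Function.Bijective g := Finite.surjective_iff_bijective.1 hsurjg
      refine ⟨Equiv.ofBijective g hbij, ?_, ?_⟩
      · refine Finset.mem_filter.2 ⟨Finset.mem_univ _, ?_⟩
        intro i j hle hne
        set π := Equiv.ofBijective g hbij with hπ
        by_contra hlt
        push_neg at hlt
        have hji : ((π.symm j : Fin n) : ℕ) ≤ ((π.symm i : Fin n) : ℕ) := hlt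
        have h1 : g (π.symm i) = i := π.apply_symm_apply i
        have h2 : g (π.symm j) = j := π.apply_symm_apply j
        have hj : j ∈ pref g ((π.symm i : ℕ) + 1) := by
          refine Finset.mem_image.2 ⟨π.symm j, ?_, h2⟩
          simp only [Finset.mem_filter, Finset.mem_univ, true_and]
          omega
        have hle' : opLe blk (g (π.symm i)) j := by rw [h1]; exact hle
        have := hok (π.symm i) j hj hle'
        rw [h1] at this
        exact hne this
      · rfl
    · -- values agree
      intro π hπ
      apply Finset.prod_congr rfl
      intro t _
      rw [prefixSet_eq_pref]
end

section
/- Uniqueness of PASV within the state-choice factorization family: suppose p(π) ∝ ∏_{t=1}^n s(S_t)·c_λ(π_t; S_t) on linear extensions, where s : feasible sets → ℝ_{>0} does not depend on λ, and for each feasible S the choice weights satisfy ∑_{i ∈ max_⪯(S)} c_λ(i;S) = 1. If additionally (Weight Proportionality) c_λ(i;S)/c_λ(j;S) = λ_i/λ_j for all i,j ∈ max_⪯(S), then necessarily c_λ(i;S) = λ_i / ∑_{k ∈ max_⪯(S)} λ_k; and if (Equal-Weight Uniformity) the induced distribution is uniform on Π^⪯ whenever λ is constant, then the resulting p equals the PASV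 distribution p^{(⪯,λ)}(π) ∝ ∏_{t=1}^n λ_{π_t}·|max_⪯(S_t)| / ∑_{k∈max_⪯(S_t)} λ_k. -/
open Finset
open scoped Classical BigOperators

def Feasible {n : ℕ} (le : Fin n → Fin n → Prop) (S : Finset (Fin n)) : Prop :=
  ∀ i ∈ S, ∀ j, le j i → j ∈ S

noncomputable def scfW {n : ℕ} (le : Fin n → Fin n → Prop)
    (s : Finset (Fin n) → ℝ) (c : (Fin n → ℝ) → Fin n → Finset (Fin n) → ℝ)
    (lam : Fin n → ℝ) (π : Equiv.Perm (Fin n)) : ℝ :=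
  ∏ t : Fin n, s (prefixSet π (t.1 + 1)) * c lam (π t) (prefixSet π (t.1 + 1))

noncomputable def scfDist {n : ℕ} (le : Fin n → Fin n → Prop)
    (s : Finset (Fin n) → ℝ) (c : (Fin n → ℝ) → Fin n → Finset (Fin n) → ℝ)
    (lam : Fin n → ℝ) (π : Equiv.Perm (Fin n)) : ℝ :=
  if IsLinExt le π then
    scfW le s c lam π /
      ∑ σ ∈ Finset.univ.filter (fun σ => IsLinExt le σ), scfW le s c lam σ
  else 0

lemma feasible_prefix {n : ℕ} {le : Fin n → Fin n → Prop} {π : Equiv.Perm (Fin n)}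
    (hπ : IsLinExt le π) (t : ℕ) : Feasible le (prefixSet π t) := by
  intro i hi j hj
  simp only [prefixSet, mem_filter, mem_univ, true_and] at hi ⊢
  by_cases h : j = i
  · subst h; exact hi
  · exact lt_trans (hπ j i hj h) hi

lemma mem_maxSet_self {n : ℕ} {le : Fin n → Fin n → Prop} {π : Equiv.Perm (Fin n)}
    (hπ : IsLinExt le π) (t : Fin n) :
    π t ∈ maxSet le (prefixSet π (t.1 + 1)) := by
  simp only [maxSet, prefixSet, mem_filter, mem_univ, true_and, Equiv.symm_apply_apply]
  refine ⟨Nat.lt_succ_self _, ?_⟩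
  intro j hj hle'
  by_contra hne
  have h1 := hπ (π t) j hle' hne
  simp only [Equiv.symm_apply_apply] at h1
  omega

lemma choice_eq {n : ℕ} {le : Fin n → Fin n → Prop}
    {c : (Fin n → ℝ) → Fin n → Finset (Fin n) → ℝ}
    (hcpos : ∀ lam : Fin n → ℝ, (∀ j, 0 < lam j) →
        ∀ S, Feasible le S → ∀ i ∈ maxSet le S, 0 < c lam i S)
    (hnorm : ∀ lam : Fin n → ℝ, (∀ j, 0 < lam j) →
        ∀ S, Feasible le S → S.Nonempty → ∑ i ∈ maxSet le S, c lam i S = 1)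
    (hWP : ∀ lam : Fin n → ℝ, (∀ j, 0 < lam j) →
        ∀ S, Feasible le S → ∀ i ∈ maxSet le S, ∀ j ∈ maxSet le S,
          c lam i S / c lam j S = lam i / lam j)
    (lam : Fin n → ℝ) (hlam : ∀ j, 0 < lam j)
    (S : Finset (Fin n)) (hS : Feasible le S) (i : Fin n) (hi : i ∈ maxSet le S) :
    c lam i S = lam i / ∑ k ∈ maxSet le S, lam k := by
  have hSne : S.Nonempty := ⟨i, (mem_filter.mp hi).1⟩
  have hsum : 0 < ∑ k ∈ maxSet le S, lam k :=
    Finset.sum_pos (fun k _ => hlam k) ⟨i, hi⟩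
  have hci : 0 < c lam i S := hcpos lam hlam S hS i hi
  have hk : ∀ k ∈ maxSet le S, c lam k S = lam k * (c lam i S / lam i) := by
    intro k hk
    have hwp := hWP lam hlam S hS k hk i hi
    have h2 : c lam k S * lam i = lam k * c lam i S :=
      (div_eq_div_iff hci.ne' (hlam i).ne').mp hwp
    rw [← mul_div_assoc, eq_div_iff (hlam i).ne']
    linarith [h2]
  have h1 := hnorm lam hlam S hS hSne
  rw [Finset.sum_congr rfl hk, ← Finset.sum_mul] at h1
  rw [eq_div_iff hsum.ne']
  have hli := (hlam i).ne'
  field_simp at h1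
  linarith [h1]

theorem stmt15 {n : ℕ} (le : Fin n → Fin n → Prop) (hle : IsPartialOrder (Fin n) le)
    (s : Finset (Fin n) → ℝ) (hs : ∀ S, 0 < s S)
    (c : (Fin n → ℝ) → Fin n → Finset (Fin n) → ℝ)
    (hcpos : ∀ lam : Fin n → ℝ, (∀ j, 0 < lam j) →
        ∀ S, Feasible le S → ∀ i ∈ maxSet le S, 0 < c lam i S)
    (hnorm : ∀ lam : Fin n → ℝ, (∀ j, 0 < lam j) →
        ∀ S, Feasible le S → S.Nonempty → ∑ i ∈ maxSet le S, c lam i S = 1)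
    (hWP : ∀ lam : Fin n → ℝ, (∀ j, 0 < lam j) →
        ∀ S, Feasible le S → ∀ i ∈ maxSet le S, ∀ j ∈ maxSet le S,
          c lam i S / c lam j S = lam i / lam j) :
    (∀ lam : Fin n → ℝ, (∀ j, 0 < lam j) →
        ∀ S, Feasible le S → S.Nonempty → ∀ i ∈ maxSet le S,
          c lam i S = lam i / ∑ k ∈ maxSet le S, lam k) ∧
    ((∀ k : ℝ, 0 < k → ∀ π : Equiv.Perm (Fin n), IsLinExt le π →
          scfDist le s c (fun _ => k) π =
            1 / (Finset.univ.filter (fun σ => IsLinExt le σ)).card) →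
      ∀ lam : Fin n → ℝ, (∀ j, 0 < lam j) → ∀ π : Equiv.Perm (Fin n),
        scfDist le s c lam π = pasvDist le lam π) := by
  have hce := choice_eq (le := le) (c := c) hcpos hnorm hWP
  constructor
  · intro lam hlam S hS _ i hi
    exact hce lam hlam S hS i hi
  · intro hunif lam hlam π
    by_cases hπ : IsLinExt le π
    swap
    · simp [scfDist, pasvDist, hπ]
    -- decomposition of scfW
    have hQ : ∀ (μ : Fin n → ℝ), (∀ j, 0 < μ j) → ∀ σ : Equiv.Perm (Fin n), IsLinExt le σ →
        scfW le s c μ σ =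
          (∏ t : Fin n, s (prefixSet σ (t.1 + 1))) *
            ∏ t : Fin n, μ (σ t) / ∑ k ∈ maxSet le (prefixSet σ (t.1 + 1)), μ k := by
      intro μ hμ σ hσ
      rw [← Finset.prod_mul_distrib]
      exact Finset.prod_congr rfl fun t _ => by
        rw [hce μ hμ _ (feasible_prefix hσ _) (σ t) (mem_maxSet_self hσ t)]
    -- decomposition of pasvW
    have hP : ∀ (μ : Fin n → ℝ) (σ : Equiv.Perm (Fin n)),
        pasvW le μ σ =
          (∏ t : Fin n, ((maxSet le (prefixSet σ (t.1 + 1))).card : ℝ)) *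
            ∏ t : Fin n, μ (σ t) / ∑ k ∈ maxSet le (prefixSet σ (t.1 + 1)), μ k := by
      intro μ σ
      rw [← Finset.prod_mul_distrib]
      exact Finset.prod_congr rfl fun t _ => by rw [mul_comm, mul_div_assoc]
    have hone : ∀ j : Fin n, (0:ℝ) < (fun _ : Fin n => (1:ℝ)) j := fun _ => one_pos
    have hcard : ∀ (σ : Equiv.Perm (Fin n)), IsLinExt le σ → ∀ t : Fin n,
        0 < (maxSet le (prefixSet σ (t.1 + 1))).card :=
      fun σ hσ t => Finset.card_pos.mpr ⟨σ t, mem_maxSet_self hσ t⟩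
    -- for constant lam = 1
    have hQ1 : ∀ σ : Equiv.Perm (Fin n), IsLinExt le σ →
        scfW le s c (fun _ => (1:ℝ)) σ *
          (∏ t : Fin n, ((maxSet le (prefixSet σ (t.1 + 1))).card : ℝ)) =
          ∏ t : Fin n, s (prefixSet σ (t.1 + 1)) := by
      intro σ hσ
      rw [hQ _ hone σ hσ, mul_assoc, ← Finset.prod_mul_distrib]
      have : ∀ t : Fin n, t ∈ Finset.univ →
          ((1:ℝ) / ∑ k ∈ maxSet le (prefixSet σ (t.1 + 1)), (1:ℝ)) *
            ((maxSet le (prefixSet σ (t.1 + 1))).card : ℝ) = 1 := by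
        intro t _
        rw [Finset.sum_const, nsmul_eq_mul, mul_one, one_div, inv_mul_cancel₀]
        exact_mod_cast (hcard σ hσ t).ne'
      rw [Finset.prod_congr rfl this, Finset.prod_const_one, mul_one]
    set L := Finset.univ.filter (fun σ : Equiv.Perm (Fin n) => IsLinExt le σ) with hL
    have hmemL : ∀ σ : Equiv.Perm (Fin n), σ ∈ L ↔ IsLinExt le σ := by
      intro σ; simp [hL]
    have hLne : L.Nonempty := ⟨π, (hmemL π).mpr hπ⟩
    have hscfpos : ∀ (μ : Fin n → ℝ), (∀ j, 0 < μ j) → ∀ σ ∈ L, 0 < scfW le s c μ σ := by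
      intro μ hμ σ hσ
      have hσ' := (hmemL σ).mp hσ
      exact Finset.prod_pos fun t _ => mul_pos (hs _)
        (hcpos μ hμ _ (feasible_prefix hσ' _) (σ t) (mem_maxSet_self hσ' t))
    have hpasvpos : ∀ σ ∈ L, 0 < pasvW le lam σ := by
      intro σ hσ
      have hσ' := (hmemL σ).mp hσ
      refine Finset.prod_pos fun t _ => div_pos (mul_pos (hlam _) ?_) ?_
      · exact_mod_cast hcard σ hσ' t
      · exact Finset.sum_pos (fun k _ => hlam k) ⟨σ t, mem_maxSet_self hσ' t⟩
    set Z1 := ∑ σ ∈ L, scfW le s c (fun _ => (1:ℝ)) σ with hZ1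
    have hZ1pos : 0 < Z1 := Finset.sum_pos (fun σ hσ => hscfpos _ hone σ hσ) hLne
    have hNpos : 0 < (L.card : ℝ) := by exact_mod_cast Finset.card_pos.mpr hLne
    set C := Z1 / (L.card : ℝ) with hC
    have hCpos : 0 < C := div_pos hZ1pos hNpos
    -- uniformity gives scfW 1 σ = C for lin ext σ
    have hconst : ∀ σ : Equiv.Perm (Fin n), IsLinExt le σ →
        scfW le s c (fun _ => (1:ℝ)) σ = C := by
      intro σ hσ
      have hu := hunif 1 one_pos σ hσ
      simp only [scfDist, if_pos hσ] at hu
      have huu : scfW le s c (fun _ => (1:ℝ)) σ / Z1 = 1 / (L.card : ℝ) := hu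
      rw [div_eq_div_iff hZ1pos.ne' hNpos.ne'] at huu
      rw [hC, eq_div_iff hNpos.ne']
      linarith [huu]
    -- key: scfW lam σ = C * pasvW lam σ
    have hkey : ∀ σ : Equiv.Perm (Fin n), IsLinExt le σ →
        scfW le s c lam σ = C * pasvW le lam σ := by
      intro σ hσ
      have hR : (∏ t : Fin n, s (prefixSet σ (t.1 + 1))) =
          C * ∏ t : Fin n, ((maxSet le (prefixSet σ (t.1 + 1))).card : ℝ) := by
        rw [← hQ1 σ hσ, hconst σ hσ]
      rw [hQ lam hlam σ hσ, hR, hP lam σ, mul_assoc]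
    have hsum : ∑ σ ∈ L, scfW le s c lam σ = C * ∑ σ ∈ L, pasvW le lam σ := by
      rw [Finset.mul_sum]
      exact Finset.sum_congr rfl fun σ hσ => hkey σ ((hmemL σ).mp hσ)
    simp only [scfDist, pasvDist, if_pos hπ, ← hL]
    rw [hkey π hπ, hsum, mul_div_mul_left _ _ hCpos.ne']
end
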